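/- Assume C is semiprime. For every prime element p of C, O(p) = ⨅{q ∈ Spec(C) | q ≤ p}. -/
import Mathlib


open CompleteLattice

/-- A complete lattice equipped with a commutator operation, axiomatizing the congruence
lattice of an algebra in a semidegenerate congruence-modular variety whose compact
congruences are closed under the commutator. -/
class CommutatorLattice (C : Type*) [CompleteLattice C] where
  comm : C → C → C
  comm_comm : ∀ a b : C, comm a b = comm b a
  comm_sSup : ∀ (s : Set C) (b : C), comm (sSup s) b = ⨆ a ∈ s, comm a b
  comm_le_inf : ∀ a b : C, comm a b ≤ a ⊓ b
  comm_top : ∀ a : C, comm a ⊤ = a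
  compactlyGenerated : ∀ x : C,
    ∃ s : Set C, (∀ a ∈ s, IsCompactElement a) ∧ sSup s = x
  top_isCompact : IsCompactElement (⊤ : C)
  comm_isCompact : ∀ a b : C, IsCompactElement a → IsCompactElement b →
    IsCompactElement (comm a b)

namespace CommutatorLattice

variable {C : Type*} [CompleteLattice C] [CommutatorLattice C]

/-- The residuation `a → b := ⨆ {c | [a,c] ≤ b}`. -/
def resid (a b : C) : C := sSup {c : C | comm a c ≤ b}

/-- The annihilator `a⊥ := a → ⊥`. -/
def ann (a : C) : C := resid a ⊥

/-- Iterated commutator: `cpow a n = [a,a]^n`, with the convention `[a,a]^0 = a`.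
Note that `[a,b]^n` for `n ≥ 1` equals `cpow (comm a b) (n-1)`. -/
def cpow (a : C) : ℕ → C
  | 0 => a
  | n + 1 => comm (cpow a n) (cpow a n)

/-- Prime elements: `p ≠ ⊤` and `[a,b] ≤ p` implies `a ≤ p` or `b ≤ p`. -/
def IsPrime (p : C) : Prop := p ≠ ⊤ ∧ ∀ a b : C, comm a b ≤ p → a ≤ p ∨ b ≤ p

/-- The radical `ρ(a) := ⨅ {p prime | a ≤ p}`. -/
def radical (a : C) : C := sInf {p : C | IsPrime p ∧ a ≤ p}

variable (C) in
/-- `C` is semiprime if `ρ(⊥) = ⊥`. -/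
def Semiprime : Prop := radical (⊥ : C) = ⊥

variable (C) in
/-- Condition (⋆): for all compact `a`, `b` and all `n ≥ 1` there is `m ≥ 0` with
`[[a,a]^m, [b,b]^m] ≤ [a,b]^n`.  Here `cpow (comm a b) n = [a,b]^(n+1)`, so `n : ℕ`
ranges exactly over the exponents `≥ 1` of the paper. -/
def Star : Prop := ∀ a b : C, IsCompactElement a → IsCompactElement b →
  ∀ n : ℕ, ∃ m : ℕ, comm (cpow a m) (cpow b m) ≤ cpow (comm a b) n

/-- Pure elements: `t ⊔ a⊥ = ⊤` for every compact `a ≤ t`. -/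
def IsPure (t : C) : Prop := ∀ a : C, IsCompactElement a → a ≤ t → t ⊔ ann a = ⊤

/-- w-pure elements: `t ⊔ (a → ρ(⊥)) = ⊤` for every compact `a ≤ t`. -/
def IsWPure (t : C) : Prop :=
  ∀ a : C, IsCompactElement a → a ≤ t → t ⊔ resid a (radical ⊥) = ⊤

/-- Complemented elements. -/
def IsComplEl (a : C) : Prop := ∃ b : C, a ⊔ b = ⊤ ∧ a ⊓ b = ⊥

/-- Regular elements: joins of sets of complemented elements. -/
def IsRegular (t : C) : Prop := ∃ S : Set C, (∀ a ∈ S, IsComplEl a) ∧ t = sSup S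

/-- Max-regular elements: maximal among regular elements distinct from `⊤`. -/
def IsMaxRegular (t : C) : Prop :=
  IsRegular t ∧ t ≠ ⊤ ∧ ∀ u : C, IsRegular u → u ≠ ⊤ → t ≤ u → u = t

/-- Maximal elements of `C \ {⊤}`. -/
def IsMaximal (p : C) : Prop := p ≠ ⊤ ∧ ∀ q : C, q ≠ ⊤ → p ≤ q → q = p

/-- Minimal primes. -/
def IsMinPrime (p : C) : Prop := IsPrime p ∧ ∀ q : C, IsPrime q → q ≤ p → q = p

variable (C) in
/-- `C` is mp if every prime lies above a unique minimal prime. -/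
def MP : Prop := ∀ p : C, IsPrime p → ∃! q : C, IsMinPrime q ∧ q ≤ p

variable (C) in
/-- `C` is PF if `a⊥` is pure for every compact `a`. -/
def PF : Prop := ∀ a : C, IsCompactElement a → IsPure (ann a)

variable (C) in
/-- `C` is PP if `a⊥` is complemented for every compact `a`. -/
def PP : Prop := ∀ a : C, IsCompactElement a → IsComplEl (ann a)

/-- `O(p) := ⨆ {a compact | a⊥ ≰ p}`. -/
def O (p : C) : C := sSup {a : C | IsCompactElement a ∧ ¬ ann a ≤ p}

variable (C) in
/-- `C` is normal. -/
def Normal : Prop := ∀ t u : C, t ⊔ u = ⊤ →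
  ∃ a b : C, t ⊔ a = ⊤ ∧ u ⊔ b = ⊤ ∧ comm a b = ⊥

variable (C) in
/-- `C` is B-normal. -/
def BNormal : Prop := ∀ t u : C, t ⊔ u = ⊤ →
  ∃ a b : C, IsComplEl a ∧ IsComplEl b ∧ t ⊔ a = ⊤ ∧ u ⊔ b = ⊤ ∧ comm a b = ⊥

variable (C) in
/-- `C` is purified. -/
def Purified : Prop := ∀ p q : C, IsMinPrime p → IsMinPrime q → p ≠ q →
  ∃ a : C, IsComplEl a ∧ a ≤ p ∧ ann a ≤ q

variable (C) in
/-- The prime spectrum of `C`. -/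
abbrev Spec := {p : C // IsPrime p}

variable (C) in
/-- The Zariski topology on `Spec C`: the closed sets are the `V(t) = {p | t ≤ p}`,
equivalently the topology generated by the sets `D(t) = {p | t ≰ p}`. -/
def zariskiTop : TopologicalSpace (Spec C) :=
  TopologicalSpace.generateFrom {U : Set (Spec C) | ∃ t : C, U = {p : Spec C | ¬ t ≤ p.1}}

variable (C) in
/-- The flat topology on `Spec C`: generated by the open basis `V(a)`, `a` compact. -/
def flatTop : TopologicalSpace (Spec C) :=
  TopologicalSpace.generateFrom
    {U : Set (Spec C) | ∃ a : C, IsCompactElement a ∧ U = {p : Spec C | a ≤ p.1}}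

/-! ### Auxiliary lemmas -/

section Aux

lemma comm_sup_left' (a b c : C) : comm (a ⊔ b) c = comm a c ⊔ comm b c := by
  rw [← sSup_pair, comm_sSup, iSup_pair]

lemma comm_mono' {a b c d : C} (hab : a ≤ b) (hcd : c ≤ d) : comm a c ≤ comm b d := by
  have h1 : comm a c ≤ comm b c := by
    have : comm (a ⊔ b) c = comm a c ⊔ comm b c := comm_sup_left' a b c
    rw [sup_eq_right.mpr hab] at this
    rw [this]; exact le_sup_left
  have h2 : comm b c ≤ comm b d := by
    rw [comm_comm b c, comm_comm b d]
    have : comm (c ⊔ d) b = comm c b ⊔ comm d b := comm_sup_left' c d b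
    rw [sup_eq_right.mpr hcd] at this
    rw [this]; exact le_sup_left
  exact h1.trans h2

lemma comm_le_left' (a b : C) : comm a b ≤ a := (comm_le_inf a b).trans inf_le_left

lemma comm_le_right' (a b : C) : comm a b ≤ b := (comm_le_inf a b).trans inf_le_right

lemma cpow_isCompact' {a : C} (ha : IsCompactElement a) (n : ℕ) :
    IsCompactElement (cpow a n) := by
  induction n with
  | zero => exact ha
  | succ n ih => exact comm_isCompact _ _ ih ih

lemma cpow_succ_le' (a : C) (n : ℕ) : cpow a (n + 1) ≤ cpow a n := comm_le_left' _ _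

lemma cpow_le_cpow' (a : C) {m n : ℕ} (h : m ≤ n) : cpow a n ≤ cpow a m := by
  induction n with
  | zero => simp [Nat.le_zero.mp h]
  | succ n ih =>
    rcases Nat.lt_or_ge m (n + 1) with h' | h'
    · exact (cpow_succ_le' a n).trans (ih (Nat.lt_succ_iff.mp h'))
    · have : m = n + 1 := le_antisymm h h'
      simp [this]

lemma cpow_le_prime' {p : C} (hp : IsPrime p) {a : C} {n : ℕ} (h : cpow a n ≤ p) : a ≤ p := by
  induction n with
  | zero => exact h
  | succ n ih =>
    rcases hp.2 _ _ h with h' | h' <;> exact ih h'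

/-- Prime separation: if no iterated commutator power of a compact `t` lies below `x`,
then there is a prime above `x` avoiding `t`. -/
lemma exists_prime_avoiding {x t : C} (ht : IsCompactElement t)
    (h : ∀ n, ¬ cpow t n ≤ x) : ∃ P : C, IsPrime P ∧ x ≤ P ∧ ¬ t ≤ P := by
  set S : Set C := {y | x ≤ y ∧ ∀ n, ¬ cpow t n ≤ y} with hS
  have hxS : x ∈ S := ⟨le_rfl, h⟩
  obtain ⟨P, hxP, hPS, hPmax⟩ := zorn_le_nonempty₀ S (fun c hcS hchain y hyc => by
    refine ⟨sSup c, ⟨((hcS hyc).1).trans (le_sSup hyc), fun n hn => ?_⟩, fun z hz => le_sSup hz⟩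
    obtain ⟨z, hz, hle⟩ := (isCompactElement_iff_le_of_directed_sSup_le C _).mp
      (cpow_isCompact' ht n) c ⟨y, hyc⟩ (hchain.directedOn) hn
    exact (hcS hz).2 n hle) x hxS
  have ht0 : ¬ t ≤ P := hPS.2 0
  refine ⟨P, ⟨?_, ?_⟩, hxP, ht0⟩
  · rintro rfl; exact ht0 le_top
  · intro b c hbc
    by_contra hcon
    push_neg at hcon
    obtain ⟨hb, hc⟩ := hcon
    have hnb : P ⊔ b ∉ S := fun hmem => hb (le_sup_right.trans (hPmax hmem le_sup_left))
    have hnc : P ⊔ c ∉ S := fun hmem => hc (le_sup_right.trans (hPmax hmem le_sup_left))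
    have hxPb : x ≤ P ⊔ b := hxP.trans le_sup_left
    have hxPc : x ≤ P ⊔ c := hxP.trans le_sup_left
    simp only [hS, Set.mem_setOf_eq, not_and, not_forall, not_not] at hnb hnc
    obtain ⟨n, hn⟩ := hnb hxPb
    obtain ⟨m, hm⟩ := hnc hxPc
    have h1 : cpow t (max n m) ≤ P ⊔ b := (cpow_le_cpow' t (le_max_left n m)).trans hn
    have h2 : cpow t (max n m) ≤ P ⊔ c := (cpow_le_cpow' t (le_max_right n m)).trans hm
    have h3 : cpow t (max n m + 1) ≤ P := by
      have : comm (cpow t (max n m)) (cpow t (max n m)) ≤ comm (P ⊔ b) (P ⊔ c) :=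
        comm_mono' h1 h2
      refine this.trans ?_
      rw [comm_sup_left']
      refine sup_le (comm_le_left' _ _) ?_
      rw [comm_comm, comm_sup_left']
      exact sup_le (comm_le_left' _ _) (by rw [comm_comm]; exact hbc)
    exact hPS.2 _ h3

lemma le_radical' (a : C) : a ≤ radical a := le_sInf fun p hp => hp.2

lemma radical_mono' {a b : C} (h : a ≤ b) : radical a ≤ radical b :=
  sInf_le_sInf fun p hp => ⟨hp.1, h.trans hp.2⟩

lemma radical_radical' (a : C) : radical (radical a) = radical a := by
  refine le_antisymm (le_sInf fun p hp => sInf_le ⟨hp.1, sInf_le hp⟩) (le_radical' _)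

lemma inf_le_of_comm_le_radical {q u v : C} (hq : radical q = q) (h : comm u v ≤ q) :
    u ⊓ v ≤ q := by
  rw [← hq]
  refine le_sInf fun P hP => ?_
  rcases hP.1.2 u v (h.trans hP.2) with h' | h'
  · exact inf_le_left.trans h'
  · exact inf_le_right.trans h'

lemma radical_inf_le_radical_inf (u v : C) : radical u ⊓ radical v ≤ radical (u ⊓ v) := by
  refine le_sInf fun P hP => ?_
  rcases hP.1.2 u v ((comm_le_inf u v).trans hP.2) with h' | h'
  · exact inf_le_left.trans (sInf_le ⟨hP.1, h'⟩)
  · exact inf_le_right.trans (sInf_le ⟨hP.1, h'⟩)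

lemma exists_cpow_le_of_le_radical {t x : C} (ht : IsCompactElement t)
    (h : t ≤ radical x) : ∃ n, cpow t n ≤ x := by
  by_contra hcon
  push_neg at hcon
  obtain ⟨P, hP, hxP, htP⟩ := exists_prime_avoiding ht hcon
  exact htP (h.trans (sInf_le ⟨hP, hxP⟩))

lemma le_of_cpow_le_radical {t x : C} {n : ℕ} (hx : radical x = x) (h : cpow t n ≤ x) :
    t ≤ x := by
  rw [← hx]
  exact le_sInf fun P hP => cpow_le_prime' hP.1 (h.trans hP.2)

end Aux

theorem statement4 (h : Semiprime C) (p : C) (hp : IsPrime p) :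
    O p = sInf {q : C | IsPrime q ∧ q ≤ p} := by
  have htopp : ¬ (⊤ : C) ≤ p := fun hle => hp.1 (top_le_iff.mp hle)
  refine le_antisymm ?_ ?_
  · -- easy direction: O p ≤ sInf
    refine sSup_le fun a ha => le_sInf fun q hq => ?_
    obtain ⟨hacomp, hann⟩ := ha
    have hannq : ¬ ann a ≤ q := fun hle => hann (hle.trans hq.2)
    obtain ⟨c, hc, hcq⟩ : ∃ c, comm a c ≤ ⊥ ∧ ¬ c ≤ q := by
      by_contra hcon
      push_neg at hcon
      exact hannq (sSup_le fun c hc => hcon c hc)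
    rcases hq.1.2 a c (hc.trans bot_le) with h' | h'
    · exact h'
    · exact absurd h' hcq
  · -- hard direction: sInf ≤ O p
    obtain ⟨s, hscomp, hssup⟩ := compactlyGenerated (sInf {q : C | IsPrime q ∧ q ≤ p})
    rw [← hssup]
    refine sSup_le fun a haS => ?_
    have hacomp : IsCompactElement a := hscomp a haS
    have hale : a ≤ sInf {q : C | IsPrime q ∧ q ≤ p} := hssup ▸ le_sSup haS
    refine le_sSup ⟨hacomp, fun hannp => ?_⟩
    -- hannp : ann a ≤ p; build a prime q ≤ p with a ≰ q, contradiction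
    set W : Set C := {x | radical x = x ∧
      ∀ t : C, IsCompactElement t → ¬ t ≤ p → ¬ comm a t ≤ x ∧ ¬ t ≤ x} with hW
    have hbotW : (⊥ : C) ∈ W := by
      refine ⟨h, fun t htc htp => ⟨?_, ?_⟩⟩
      · intro hle
        have hta : t ≤ ann a := le_sSup hle
        exact htp (hta.trans hannp)
      · intro hle
        exact htp (le_bot_iff.mp hle ▸ bot_le)
    obtain ⟨q, -, hqW, hqmax⟩ := zorn_le_nonempty₀ W (fun c hcW hchain y hyc => by
      refine ⟨radical (sSup c), ⟨radical_radical' _, fun t htc htp => ⟨?_, ?_⟩⟩,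
        fun z hz => (le_sSup hz).trans (le_radical' _)⟩
      · intro hle
        obtain ⟨n, hn⟩ := exists_cpow_le_of_le_radical (comm_isCompact _ _ hacomp htc) hle
        obtain ⟨z, hz, hle'⟩ := (isCompactElement_iff_le_of_directed_sSup_le C _).mp
          (cpow_isCompact' (comm_isCompact _ _ hacomp htc) n) c ⟨y, hyc⟩
          hchain.directedOn hn
        exact ((hcW hz).2 t htc htp).1 (le_of_cpow_le_radical (hcW hz).1 hle')
      · intro hle
        obtain ⟨n, hn⟩ := exists_cpow_le_of_le_radical htc hle
        obtain ⟨z, hz, hle'⟩ := (isCompactElement_iff_le_of_directed_sSup_le C _).mp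
          (cpow_isCompact' htc n) c ⟨y, hyc⟩ hchain.directedOn hn
        exact ((hcW hz).2 t htc htp).2 (le_of_cpow_le_radical (hcW hz).1 hle')) ⊥ hbotW
    obtain ⟨hqrad, hqcond⟩ := hqW
    have haq : ¬ a ≤ q := by
      have := (hqcond ⊤ top_isCompact htopp).1
      rwa [comm_top] at this
    have hqp : q ≤ p := by
      by_contra hqp
      obtain ⟨u, hucomp, husup⟩ := compactlyGenerated q
      have : ∃ t ∈ u, ¬ t ≤ p := by
        by_contra hcon
        push_neg at hcon
        exact hqp (husup ▸ sSup_le hcon)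
      obtain ⟨t, htu, htp⟩ := this
      exact (hqcond t (hucomp t htu) htp).2 (husup ▸ le_sSup htu)
    have hqprime : IsPrime q := by
      refine ⟨fun hq => haq (hq ▸ le_top), fun b c hbc => ?_⟩
      by_contra hcon
      push_neg at hcon
      obtain ⟨hb, hc⟩ := hcon
      -- q ⊔ b and q ⊔ c radicalized are strictly above q, hence not in W
      have key : ∀ d : C, ¬ d ≤ q → ∃ t : C, IsCompactElement t ∧ ¬ t ≤ p ∧
          (comm a t ≤ radical (q ⊔ d) ∨ t ≤ radical (q ⊔ d)) := by
        intro d hd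
        have hnotW : radical (q ⊔ d) ∉ W := by
          intro hmem
          exact hd ((le_sup_right.trans (le_radical' _)).trans
            (hqmax hmem ((le_sup_left (b := d)).trans (le_radical' _))))
        by_contra hcon
        push_neg at hcon
        exact hnotW ⟨radical_radical' _, fun t htc htp => hcon t htc htp⟩
      obtain ⟨t₁, ht₁c, ht₁p, h₁⟩ := key b hb
      obtain ⟨t₂, ht₂c, ht₂p, h₂⟩ := key c hc
      -- radical (q ⊔ b) ⊓ radical (q ⊔ c) ≤ q
      have hcommq : comm (q ⊔ b) (q ⊔ c) ≤ q := by
        rw [comm_sup_left']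
        refine sup_le (comm_le_left' _ _) ?_
        rw [comm_comm, comm_sup_left']
        exact sup_le (comm_le_left' _ _) (by rw [comm_comm]; exact hbc)
      have hinfq : radical (q ⊔ b) ⊓ radical (q ⊔ c) ≤ q := by
        refine (radical_inf_le_radical_inf _ _).trans ?_
        have : radical ((q ⊔ b) ⊓ (q ⊔ c)) ≤ radical q :=
          radical_mono' (inf_le_of_comm_le_radical hqrad hcommq)
        exact this.trans_eq hqrad
      set t : C := comm t₁ t₂ with htdef
      have htc : IsCompactElement t := comm_isCompact _ _ ht₁c ht₂c
      have htp : ¬ t ≤ p := by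
        intro hle
        rcases hp.2 t₁ t₂ hle with h' | h'
        · exact ht₁p h'
        · exact ht₂p h'
      have ht1 : t ≤ t₁ := comm_le_left' _ _
      have ht2 : t ≤ t₂ := comm_le_right' _ _
      obtain ⟨hW1, hW2⟩ := hqcond t htc htp
      rcases h₁ with h₁ | h₁ <;> rcases h₂ with h₂ | h₂
      · exact hW1 (le_inf ((comm_mono' le_rfl ht1).trans h₁)
          ((comm_mono' le_rfl ht2).trans h₂) |>.trans hinfq)
      · exact hW1 (le_inf ((comm_mono' le_rfl ht1).trans h₁)
          ((comm_le_right' a t).trans (ht2.trans h₂)) |>.trans hinfq)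
      · exact hW1 (le_inf ((comm_le_right' a t).trans (ht1.trans h₁))
          ((comm_mono' le_rfl ht2).trans h₂) |>.trans hinfq)
      · exact hW2 (le_inf (ht1.trans h₁) (ht2.trans h₂) |>.trans hinfq)
    exact haq (hale.trans (sInf_le ⟨hqprime, hqp⟩))

end CommutatorLattice
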